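/- For a d-dimensional density matrix ρ with purity P(ρ) = Tr(ρ²), let k be the integer with 1/k ≤ P(ρ) ≤ 1/(k-1) and α = 1/k - √((1-1/k)(P(ρ)-1/k)). Then the von Neumann entropy satisfies S(ρ) ≥ -(1-α) log((1-α)/(k-1)) - α log α. -/

import Mathlib

open scoped ComplexOrder

/-- Von Neumann entropy (base 2) of a Hermitian matrix, via its eigenvalues. -/
noncomputable def vnEntropy {n : Type*} [Fintype n] [DecidableEq n]
    {ρ : Matrix n n ℂ} (hρ : ρ.IsHermitian) : ℝ :=
  -∑ i, hρ.eigenvalues i * Real.logb 2 (hρ.eigenvalues i)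

/-- Purity Tr(ρ²) of a matrix. -/
noncomputable def purity {n : Type*} [Fintype n] (ρ : Matrix n n ℂ) : ℝ :=
  ((ρ * ρ).trace).re

open Real


lemma log_ge_one_sub_inv {x : ℝ} (hx : 0 < x) : 1 - 1/x ≤ Real.log x := by
  have h := Real.log_le_sub_one_of_pos (x := 1/x) (by positivity)
  rw [Real.log_div one_ne_zero (ne_of_gt hx), Real.log_one] at h
  have hx' : (0:ℝ) < 1/x := by positivity
  nlinarith [h]

lemma xlogx_hasDeriv {t : ℝ} (ht0 : 0 < t) :
    HasDerivAt (fun z : ℝ => z * Real.log z) (Real.log t + 1) t := by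
  have := (hasDerivAt_id' (x := t)).mul (Real.hasDerivAt_log (ne_of_gt ht0))
  exact this.congr_deriv (by rw [mul_inv_cancel₀ (ne_of_gt ht0)]; ring)

lemma lemB {z : ℝ} (hz : 1 ≤ z) : (z-1)^2/(2*z) ≤ z * Real.log z - z + 1 := by
  set g : ℝ → ℝ := fun z => z * Real.log z - z + 1 - (z - 2 + z⁻¹)/2 with hg
  have hder : ∀ t : ℝ, 0 < t → HasDerivAt g (Real.log t - (1 - t⁻¹^2)/2) t := by
    intro t ht0
    have h2 : HasDerivAt (fun z : ℝ => (z - 2 + z⁻¹)/2) ((1 - t⁻¹^2)/2) t := by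
      have := (((hasDerivAt_id' (x := t)).sub_const 2).add
        (hasDerivAt_inv (ne_of_gt ht0))).div_const 2
      have e : (1 + -(t^2)⁻¹)/2 = (1 - t⁻¹^2)/2 := by rw [inv_pow]; ring
      simpa [e] using this
    have := (((xlogx_hasDeriv ht0).sub (hasDerivAt_id' (x := t))).add_const 1).sub h2
    exact this.congr_deriv (by ring)
  have hmono : MonotoneOn g (Set.Ici 1) := by
    apply monotoneOn_of_deriv_nonneg (convex_Ici 1)
    · intro t ht
      exact (hder t (lt_of_lt_of_le one_pos ht)).continuousAt.continuousWithinAt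
    · intro t ht
      rw [interior_Ici] at ht
      exact (hder t (lt_trans one_pos ht)).differentiableAt.differentiableWithinAt
    · intro t ht
      rw [interior_Ici] at ht
      have ht0 : (0:ℝ) < t := lt_trans one_pos ht
      rw [(hder t ht0).deriv]
      have h3 := log_ge_one_sub_inv (x := t^2) (by positivity)
      rw [Real.log_pow] at h3
      push_cast at h3
      have h4 : 1/t^2 = t⁻¹^2 := by rw [inv_pow]; ring
      nlinarith [h3]
  have := hmono (Set.self_mem_Ici) (Set.mem_Ici.2 hz) hz
  have hz0 : (0:ℝ) < z := lt_of_lt_of_le one_pos hz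
  simp only [hg, Real.log_one] at this
  have e : (z-1)^2/(2*z) = (z - 2 + z⁻¹)/2 := by field_simp; ring
  rw [e]; linarith [this]

lemma lemA {z : ℝ} (hz0 : 0 < z) (hz : z ≤ 1) : (z-1)^2/2 ≤ z * Real.log z - z + 1 := by
  set g : ℝ → ℝ := fun z => z * Real.log z - z + 1 - (z-1)^2/2 with hg
  have hder : ∀ t : ℝ, 0 < t → HasDerivAt g (Real.log t - (t - 1)) t := by
    intro t ht0
    have h2 : HasDerivAt (fun z : ℝ => (z-1)^2/2) (t - 1) t := by
      have := (((hasDerivAt_id' (x := t)).sub_const 1).pow 2).div_const 2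
      exact this.congr_deriv (by ring)
    have := (((xlogx_hasDeriv ht0).sub (hasDerivAt_id' (x := t))).add_const 1).sub h2
    exact this.congr_deriv (by ring)
  have hanti : AntitoneOn g (Set.Icc z 1) := by
    apply antitoneOn_of_deriv_nonpos (convex_Icc z 1)
    · intro t ht
      exact (hder t (lt_of_lt_of_le hz0 ht.1)).continuousAt.continuousWithinAt
    · intro t ht
      rw [interior_Icc] at ht
      exact (hder t (lt_of_lt_of_le hz0 (le_of_lt ht.1))).differentiableAt.differentiableWithinAt
    · intro t ht
      rw [interior_Icc] at ht
      have ht0 : (0:ℝ) < t := lt_of_lt_of_le hz0 (le_of_lt ht.1)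
      rw [(hder t ht0).deriv]
      have := Real.log_le_sub_one_of_pos ht0
      linarith
  have := hanti (Set.mem_Icc.2 ⟨le_refl z, hz⟩) (Set.mem_Icc.2 ⟨hz, le_refl 1⟩) hz
  simp only [hg, Real.log_one] at this
  linarith [this]

/-- Remainder of the tangent-line approximation to negMulLog. -/
noncomputable def Rr (w y : ℝ) : ℝ := w * (Real.log w - Real.log y) - (w - y)

lemma negMulLog_eq_tangent_Rr (w y : ℝ) :
    Real.negMulLog w = Real.negMulLog y + (-Real.log y - 1) * (w - y) - Rr w y := by
  simp only [Real.negMulLog, Rr]; ring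

lemma Rr_nonneg {w y : ℝ} (hw : 0 < w) (hy : 0 < y) : 0 ≤ Rr w y := by
  have h : 1 - 1/(w/y) ≤ Real.log (w/y) := log_ge_one_sub_inv (by positivity)
  rw [Real.log_div (ne_of_gt hw) (ne_of_gt hy)] at h
  have e : 1 - 1/(w/y) = 1 - y/w := by rw [one_div_div]
  rw [e] at h
  have := mul_le_mul_of_nonneg_left h (le_of_lt hw)
  simp only [Rr]
  have e2 : w * (1 - y/w) = w - y := by field_simp
  nlinarith [this]

lemma Rr_le {w y : ℝ} (hw : 0 < w) (hy : 0 < y) : Rr w y ≤ (w - y)^2/y := by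
  have h : Real.log (w/y) ≤ w/y - 1 := Real.log_le_sub_one_of_pos (by positivity)
  rw [Real.log_div (ne_of_gt hw) (ne_of_gt hy)] at h
  have := mul_le_mul_of_nonneg_left h (le_of_lt hw)
  simp only [Rr]
  have e2 : w * (w/y - 1) = (w-y)^2/y + (w-y) := by field_simp; ring
  rw [e2] at this
  linarith [this]

lemma Rr_ge {w y : ℝ} (hw : 0 < w) (hy : 0 < y) : (w - y)^2/(2 * max w y) ≤ Rr w y := by
  rcases le_total w y with hle | hle
  · -- z = w/y ≤ 1, R = y*(z log z - z + 1), bound (w-y)^2/(2y)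
    have hz0 : 0 < w/y := by positivity
    have hz1 : w/y ≤ 1 := by rw [div_le_one hy]; exact hle
    have h := lemA hz0 hz1
    have := mul_le_mul_of_nonneg_left h (le_of_lt hy)
    have e1 : y * ((w/y) * Real.log (w/y) - w/y + 1) = Rr w y := by
      simp only [Rr]
      rw [Real.log_div (ne_of_gt hw) (ne_of_gt hy)]
      field_simp
      ring
    have e2 : y * ((w/y - 1)^2/2) = (w-y)^2/(2*y) := by field_simp
    rw [e1, e2] at this
    have hmax : max w y = y := max_eq_right hle
    rw [hmax]
    exact this
  · have hz1 : 1 ≤ w/y := by rw [le_div_iff₀ hy]; linarith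
    have h := lemB hz1
    have := mul_le_mul_of_nonneg_left h (le_of_lt hy)
    have e1 : y * ((w/y) * Real.log (w/y) - w/y + 1) = Rr w y := by
      simp only [Rr]
      rw [Real.log_div (ne_of_gt hw) (ne_of_gt hy)]
      field_simp
      ring
    have e2 : y * ((w/y - 1)^2/(2*(w/y))) = (w-y)^2/(2*w) := by
      field_simp
    rw [e1, e2] at this
    have hmax : max w y = w := max_eq_left hle
    rw [hmax]
    exact this


lemma negMulLog_eq_tangent (w y : ℝ) :
    Real.negMulLog w = Real.negMulLog y + (-Real.log y - 1) * (w - y)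
      - (w * (Real.log w - Real.log y) - (w - y)) :=
  negMulLog_eq_tangent_Rr w y

lemma Rr_nonneg' {w y : ℝ} (hw : 0 < w) (hy : 0 < y) :
    0 ≤ w * (Real.log w - Real.log y) - (w - y) :=
  Rr_nonneg hw hy

lemma Rr_ge' {w y : ℝ} (hw : 0 < w) (hy : 0 < y) :
    (w - y)^2/(2 * max w y) ≤ w * (Real.log w - Real.log y) - (w - y) :=
  Rr_ge hw hy


private lemma Ebound_helper {u B τ : ℝ} (h1 : -B ≤ u) (h2 : u ≤ B) (h3 : 0 < τ) (h4 : τ ≤ 1) :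
    -((2*B+3)*τ) ≤ 2*u*(-τ) - 3*(-τ)^2 ∧ 2*u*(-τ) - 3*(-τ)^2 ≤ (2*B+3)*τ := by
  have p1 : 0 ≤ (B - u)*τ := mul_nonneg (by linarith) h3.le
  have p2 : 0 ≤ (B + u)*τ := mul_nonneg (by linarith) h3.le
  have p3 : 0 ≤ (1 - τ)*τ := mul_nonneg (by linarith) h3.le
  constructor <;> nlinarith [p1, p2, p3, sq_nonneg τ]

private lemma delta_helper {r G E M τ : ℝ} (hr : 0 ≤ r) (hG : 0 < G) (hM : 0 < M) (hτ : 0 < τ)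
    (hE : (r - G) * (r + G) = E) (h1 : -(M*τ) ≤ E) (h2 : E ≤ M*τ) :
    -(M*τ) ≤ (r - G)*G ∧ (r - G)*G ≤ M*τ := by
  have hEe : (r - G)*r + (r - G)*G = E := by linear_combination hE
  have hMτ : 0 ≤ M*τ := le_of_lt (mul_pos hM hτ)
  rcases le_or_gt 0 (r - G) with hδ | hδ
  · have hp : 0 ≤ (r - G)*r := mul_nonneg hδ hr
    exact ⟨by nlinarith [mul_nonneg hδ hG.le], by nlinarith [hp]⟩
  · have hp : (r - G)*r ≤ 0 := mul_nonpos_of_nonpos_of_nonneg hδ.le hr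
    exact ⟨by nlinarith [hp], by nlinarith [mul_neg_of_neg_of_pos hδ hG]⟩

private lemma S2G_helper {δ G M τ : ℝ} (h1 : -(M*τ) ≤ δ*G) (h2 : δ*G ≤ M*τ) :
    ((3*τ^2 + δ^2)/2)*G^2 ≤ ((3*G^2 + M^2)/2)*τ^2 := by
  have := mul_nonneg (by linarith : 0 ≤ M*τ - δ*G) (by linarith : 0 ≤ M*τ + δ*G)
  nlinarith [this]

private lemma final_helper {cG G W2 L τ S2 : ℝ} (hcG : 0 < cG) (hG : 0 < G) (hL : 0 < L)
    (hτ : 0 < τ) (hS2 : 0 ≤ S2) (hS2G : S2*G^2 ≤ W2*τ^2)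
    (hτcc : τ*(L*W2 + 1) ≤ cG*G^2) (hfin : cG*τ ≤ L*S2/2) : False := by
  have h1 : L*(S2*G^2) ≤ L*(W2*τ^2) := mul_le_mul_of_nonneg_left hS2G hL.le
  have h2 : (τ*(L*W2 + 1))*τ ≤ (cG*G^2)*τ := mul_le_mul_of_nonneg_right hτcc hτ.le
  have h3 : (cG*τ)*G^2 ≤ (L*S2/2)*G^2 := mul_le_mul_of_nonneg_right hfin (by positivity)
  nlinarith [h1, h2, h3, mul_pos (mul_pos hcG hτ) (mul_pos hG hG), sq_nonneg τ, mul_pos hτ hτ]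

set_option maxHeartbeats 1000000 in
lemma core1 {x y z : ℝ} (hz : 0 < z) (hzy : z < y) (hyx : y < x)
    (hmin : ∀ x' y' z' : ℝ, 0 ≤ x' → 0 ≤ y' → 0 ≤ z' → x' + y' + z' = x + y + z →
      x'^2 + y'^2 + z'^2 = x^2 + y^2 + z^2 →
      Real.negMulLog x + Real.negMulLog y + Real.negMulLog z ≤
        Real.negMulLog x' + Real.negMulLog y' + Real.negMulLog z') : False := by
  have hy0 : 0 < y := lt_trans hz hzy
  have hx0 : 0 < x := lt_trans hy0 hyx
  obtain ⟨lx, hlx⟩ : ∃ a, a = Real.log x := ⟨_, rfl⟩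
  obtain ⟨ly, hly⟩ : ∃ a, a = Real.log y := ⟨_, rfl⟩
  obtain ⟨lz, hlz⟩ : ∃ a, a = Real.log z := ⟨_, rfl⟩
  obtain ⟨G, hG⟩ : ∃ a, a = y - z := ⟨_, rfl⟩
  have hG0 : 0 < G := by rw [hG]; linarith
  obtain ⟨B, hB1, hB2, hB0⟩ : ∃ B : ℝ, -B ≤ y + z - 2*x ∧ y + z - 2*x ≤ B ∧ 0 ≤ B :=
    ⟨|y + z - 2*x|, neg_abs_le _, le_abs_self _, abs_nonneg _⟩
  obtain ⟨M, hM⟩ : ∃ a, a = 2*B + 3 := ⟨_, rfl⟩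
  have hM0 : 0 < M := by rw [hM]; linarith
  obtain ⟨cG, hcG⟩ : ∃ a, a = ly*(x-z) - lx*(y-z) - lz*(x-y) := ⟨_, rfl⟩
  have hcG0 : 0 < cG := by
    have hxz : (0:ℝ) < x - z := by linarith
    have hconc := strictConcaveOn_log_Ioi.2 (Set.mem_Ioi.2 hx0) (Set.mem_Ioi.2 hz)
      (ne_of_gt (lt_trans hzy hyx))
      (show (0:ℝ) < (y-z)/(x-z) by apply div_pos <;> linarith)
      (show (0:ℝ) < (x-y)/(x-z) by apply div_pos <;> linarith)
      (by field_simp; ring)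
    have e1 : ((y-z)/(x-z)) • x + ((x-y)/(x-z)) • z = y := by
      simp only [smul_eq_mul]; field_simp; ring
    rw [e1] at hconc
    simp only [smul_eq_mul, ← hlx, ← hly, ← hlz] at hconc
    rw [div_mul_eq_mul_div, div_mul_eq_mul_div, ← add_div, div_lt_iff₀ hxz] at hconc
    rw [hcG]
    nlinarith [hconc]
  have hlylz : lz < ly := by rw [hly, hlz]; exact Real.log_lt_log hz hzy
  obtain ⟨W2, hW2⟩ : ∃ a, a = (3*G^2 + M^2)/2 := ⟨_, rfl⟩
  have hW20 : 0 < W2 := by rw [hW2]; positivity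
  have hden0 : 0 < (ly - lz)*W2 + 1 := by
    have := mul_pos (by linarith : (0:ℝ) < ly - lz) hW20
    linarith
  obtain ⟨τ, hτ0, hτ1, hτx, hτ3, hτ4, hτ5⟩ :
      ∃ τ : ℝ, 0 < τ ∧ τ ≤ 1 ∧ τ ≤ x/2 ∧ τ ≤ G^2/(2*M) ∧ τ ≤ z*G/(G+M) ∧
        τ ≤ cG*G^2/((ly - lz)*W2 + 1) := by
    refine ⟨min 1 (min (x/2) (min (G^2/(2*M)) (min (z*G/(G+M)) (cG*G^2/((ly - lz)*W2 + 1))))),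
      ?_, ?_, ?_, ?_, ?_, ?_⟩
    · refine lt_min one_pos (lt_min (by positivity) (lt_min (by positivity)
        (lt_min (by positivity) (by positivity))))
    · exact min_le_left _ _
    · exact le_trans (min_le_right _ _) (min_le_left _ _)
    · exact le_trans (min_le_right _ _) (le_trans (min_le_right _ _) (min_le_left _ _))
    · exact le_trans (min_le_right _ _) (le_trans (min_le_right _ _)
        (le_trans (min_le_right _ _) (min_le_left _ _)))
    · exact le_trans (min_le_right _ _) (le_trans (min_le_right _ _)
        (le_trans (min_le_right _ _) (min_le_right _ _)))
  have hτM : M*τ ≤ G^2/2 := by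
    have h := mul_le_mul_of_nonneg_left hτ3 hM0.le
    have e : M*(G^2/(2*M)) = G^2/2 := by field_simp
    rw [e] at h
    exact h
  have hτz : τ*(G+M) ≤ z*G := by
    have h := mul_le_mul_of_nonneg_right hτ4 (by positivity : (0:ℝ) ≤ G+M)
    have e : z*G/(G+M)*(G+M) = z*G := div_mul_cancel₀ _ (by positivity)
    rw [e] at h
    exact h
  have hτcc : τ*((ly - lz)*W2 + 1) ≤ cG*G^2 := by
    have h := mul_le_mul_of_nonneg_right hτ5 (le_of_lt hden0)
    have e : cG*G^2/((ly - lz)*W2 + 1)*((ly - lz)*W2 + 1) = cG*G^2 :=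
      div_mul_cancel₀ _ (ne_of_gt hden0)
    rw [e] at h
    exact h
  clear hτ3 hτ4 hτ5
  obtain ⟨t, ht⟩ : ∃ a, a = -τ := ⟨_, rfl⟩
  obtain ⟨A, hA⟩ : ∃ a, a = y + z - t := ⟨_, rfl⟩
  obtain ⟨Dt, hDt⟩ : ∃ a, a = 2*((x^2+y^2+z^2) - (x+t)^2) - A^2 := ⟨_, rfl⟩
  have hDE : Dt = G^2 + (2*(y+z-2*x)*t - 3*t^2) := by
    rw [hDt, hG, hA]; ring
  have hEbound : -(M*τ) ≤ 2*(y+z-2*x)*t - 3*t^2 ∧ 2*(y+z-2*x)*t - 3*t^2 ≤ M*τ := by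
    rw [hM, ht]
    exact Ebound_helper hB1 hB2 hτ0 hτ1
  have hDt0 : G^2/2 ≤ Dt := by rw [hDE]; linarith [hEbound.1]
  have hDtpos : 0 < Dt := lt_of_lt_of_le (by positivity) hDt0
  obtain ⟨r, hr⟩ : ∃ a, a = Real.sqrt Dt := ⟨_, rfl⟩
  have hr0 : 0 ≤ r := by rw [hr]; exact Real.sqrt_nonneg _
  have hr2 : r^2 = Dt := by rw [hr]; exact Real.sq_sqrt hDtpos.le
  have hδE : (r - G) * (r + G) = 2*(y+z-2*x)*t - 3*t^2 := by
    have h0 : r^2 - G^2 = 2*(y+z-2*x)*t - 3*t^2 := by rw [hr2, hDE]; ring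
    linear_combination h0
  obtain ⟨hδb2, hδb1⟩ := delta_helper hr0 hG0 hM0 hτ0 hδE hEbound.1 hEbound.2
  obtain ⟨δ, hδdef⟩ : ∃ a, a = r - G := ⟨_, rfl⟩
  rw [← hδdef] at hδb1 hδb2
  obtain ⟨y', hy'⟩ : ∃ a, a = (A + r)/2 := ⟨_, rfl⟩
  obtain ⟨z', hz'⟩ : ∃ a, a = (A - r)/2 := ⟨_, rfl⟩
  have hΔy : y' - y = (τ + δ)/2 := by rw [hy', hA, hδdef, ht]; rw [hG] at hδdef ⊢; ring
  have hΔz : z' - z = (τ - δ)/2 := by rw [hz', hA, hδdef, ht]; rw [hG] at hδdef ⊢; ring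
  have hkey1' : τ + δ ≤ z := by
    apply le_of_mul_le_mul_right _ hG0
    have e : (τ + δ)*G = τ*G + δ*G := by ring
    have e2 : τ*(G+M) = τ*G + M*τ := by ring
    rw [e2] at hτz
    rw [e]
    linarith
  have hkey2' : τ - δ ≤ z := by
    apply le_of_mul_le_mul_right _ hG0
    have e : (τ - δ)*G = τ*G - δ*G := by ring
    have e2 : τ*(G+M) = τ*G + M*τ := by ring
    rw [e2] at hτz
    rw [e]
    linarith
  have hy'0 : 0 < y' := by linarith [hΔy]
  have hz'0 : 0 < z' := by linarith [hΔz]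
  have hxt0 : 0 < x + t := by rw [ht]; linarith
  have hsum : (x+t) + y' + z' = x + y + z := by rw [hy', hz', hA]; ring
  have hsq : (x+t)^2 + y'^2 + z'^2 = x^2 + y^2 + z^2 := by
    have h4 : y'^2 + z'^2 = (A^2 + r^2)/2 := by rw [hy', hz']; ring
    linear_combination h4 + hr2/2 + hDt/2
  have hle := hmin (x+t) y' z' hxt0.le hy'0.le hz'0.le hsum hsq
  clear hmin hδE hDE hDt0 hDtpos hr2 hEbound hτ1 hτx hτM hτz hB1 hB2 hDt hA hr hδdef hy' hz'
  obtain ⟨Dy, hDy⟩ : ∃ a, a = y' - y := ⟨_, rfl⟩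
  obtain ⟨Dz, hDz⟩ : ∃ a, a = z' - z := ⟨_, rfl⟩
  have hDy2 : Dy = (τ + δ)/2 := by rw [hDy, hΔy]
  have hDz2 : Dz = (τ - δ)/2 := by rw [hDz, hΔz]
  have hC1 : Dy + Dz + t = 0 := by rw [hDy, hDz, ht]; linarith [hsum]
  have hC2 : y*Dy + z*Dz + x*t + (t^2 + Dy^2 + Dz^2)/2 = 0 := by
    rw [hDy, hDz]; linear_combination hsq/2
  obtain ⟨S2, hS2⟩ : ∃ a, a = t^2 + Dy^2 + Dz^2 := ⟨_, rfl⟩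
  rw [← hS2] at hC2
  have hS20 : 0 ≤ S2 := by rw [hS2]; positivity
  have hΔH : Real.negMulLog (x+t) + Real.negMulLog y' + Real.negMulLog z' ≤
      Real.negMulLog x + Real.negMulLog y + Real.negMulLog z
      + ((-lx - 1)*t + (-ly - 1)*Dy + (-lz - 1)*Dz) := by
    rw [negMulLog_eq_tangent (x+t) x, negMulLog_eq_tangent y' y, negMulLog_eq_tangent z' z]
    have r1 := Rr_nonneg' hxt0 hx0
    have r2 := Rr_nonneg' hy'0 hy0
    have r3 := Rr_nonneg' hz'0 hz
    simp only [← hlx, ← hly, ← hlz] at r1 r2 r3 ⊢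
    rw [← hDy, ← hDz]
    have e : x + t - x = t := by ring
    rw [e]
    linarith [r1, r2, r3]
  have hlin : G*((-lx - 1)*t + (-ly - 1)*Dy + (-lz - 1)*Dz) = cG*t - (lz - ly)*S2/2 := by
    rw [hcG, hG]
    linear_combination (ly*z - lz*y - (y - z)) * hC1 + (lz - ly) * hC2
  have hS2e : S2 = (3*τ^2 + δ^2)/2 := by
    rw [hS2, hDy2, hDz2, ht]; ring
  have hS2G : S2*G^2 ≤ W2*τ^2 := by
    rw [hS2e, hW2]
    exact S2G_helper hδb2 hδb1
  have hfin : cG*τ ≤ (ly - lz)*S2/2 := by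
    have hT : 0 ≤ (-lx - 1)*t + (-ly - 1)*Dy + (-lz - 1)*Dz := by linarith [hle, hΔH]
    have h5 := mul_nonneg hG0.le hT
    rw [hlin, ht] at h5
    linarith
  exact final_helper hcG0 hG0 (by linarith : (0:ℝ) < ly - lz) hτ0 hS20 hS2G hτcc hfin

private lemma final2_helper {t e L ε y g : ℝ} (ht : 0 < t) (hy : 0 < y) (hg : 0 < g)
    (hε : 0 < ε) (he0 : 0 ≤ e) (hLy : L*y = g - 2*(ε*g))
    (heup : e*((2-ε)*g) ≤ t^2) (hmain : t^2 + e^2 ≤ 2*e*L*((1+ε)*y)) : False := by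
  have h1 : e*(L*y) = e*g - 2*e*(ε*g) := by linear_combination e*hLy
  have h2 : (ε*e)*(L*y) = ε*e*g - 2*(ε*e)*(ε*g) := by linear_combination (ε*e)*hLy
  have p1 : 0 ≤ e*g*ε := by positivity
  have p2 : 0 ≤ e*g*ε*ε := by positivity
  nlinarith [h1, h2, p1, p2, sq_nonneg e, sq_nonneg t, mul_pos ht ht]

set_option maxHeartbeats 1000000 in
lemma core2 {x y : ℝ} (hy0 : 0 < y) (hyx : y < x)
    (hmin : ∀ x' y' z' : ℝ, 0 ≤ x' → 0 ≤ y' → 0 ≤ z' → x' + y' + z' = x + y + y →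
      x'^2 + y'^2 + z'^2 = x^2 + y^2 + y^2 →
      Real.negMulLog x + Real.negMulLog y + Real.negMulLog y ≤
        Real.negMulLog x' + Real.negMulLog y' + Real.negMulLog z') : False := by
  have hx0 : 0 < x := lt_trans hy0 hyx
  obtain ⟨lx, hlx⟩ : ∃ a, a = Real.log x := ⟨_, rfl⟩
  obtain ⟨ly, hly⟩ : ∃ a, a = Real.log y := ⟨_, rfl⟩
  obtain ⟨g, hg⟩ : ∃ a, a = x - y := ⟨_, rfl⟩
  have hg0 : 0 < g := by rw [hg]; linarith
  obtain ⟨L, hL⟩ : ∃ a, a = lx - ly := ⟨_, rfl⟩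
  have hL0 : 0 < L := by
    rw [hL, hlx, hly]
    have := Real.log_lt_log hy0 hyx
    linarith
  -- L*y < g  (log strictly below chord)
  have hLyg : L*y < g := by
    have h1 : Real.log (x/y) < x/y - 1 :=
      Real.log_lt_sub_one_of_pos (by positivity) (by
        intro h
        rw [div_eq_one_iff_eq (ne_of_gt hy0)] at h
        exact absurd h (ne_of_gt hyx))
    rw [Real.log_div (ne_of_gt hx0) (ne_of_gt hy0)] at h1
    have h2 := mul_lt_mul_of_pos_right h1 hy0
    have e1 : (x/y - 1)*y = x - y := by field_simp
    rw [e1] at h2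
    rw [hL, hlx, hly, hg]
    linarith
  obtain ⟨ε, hε⟩ : ∃ a, a = (g - L*y)/(2*g) := ⟨_, rfl⟩
  have hε0 : 0 < ε := by rw [hε]; apply div_pos <;> [linarith; positivity]
  have hεg : 2*(ε*g) = g - L*y := by
    rw [hε]
    field_simp
  have hLypos : 0 < L*y := mul_pos hL0 hy0
  have hε12 : ε ≤ 1/2 := by
    have e1 : (2*ε)*g = 2*(ε*g) := by ring
    have e2 : (2*ε)*g ≤ 1*g := by rw [e1]; linarith [hεg, hLypos]
    have := le_of_mul_le_mul_right e2 hg0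
    linarith
  -- choose t
  obtain ⟨t, ht0, ht1, ht2, ht3, ht4, ht5⟩ :
      ∃ t : ℝ, 0 < t ∧ t ≤ ε*y/2 ∧ t ≤ ε*g/3 ∧ t ≤ g/2 ∧ t ≤ x/2 ∧ t ≤ y/2 := by
    refine ⟨min (ε*y/2) (min (ε*g/3) (min (g/2) (min (x/2) (y/2)))), ?_, ?_, ?_, ?_, ?_, ?_⟩
    · exact lt_min (by positivity) (lt_min (by positivity) (lt_min (by positivity)
        (lt_min (by positivity) (by positivity))))
    · exact min_le_left _ _
    · exact le_trans (min_le_right _ _) (min_le_left _ _)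
    · exact le_trans (min_le_right _ _) (le_trans (min_le_right _ _) (min_le_left _ _))
    · exact le_trans (min_le_right _ _) (le_trans (min_le_right _ _)
        (le_trans (min_le_right _ _) (min_le_left _ _)))
    · exact le_trans (min_le_right _ _) (le_trans (min_le_right _ _)
        (le_trans (min_le_right _ _) (min_le_right _ _)))
  have htsq : t^2 ≤ (g/2)^2 := pow_le_pow_left₀ ht0.le ht3 2
  have hDisc : 0 ≤ g^2 - 3*t^2 := by
    have e1 : (g/2)^2 = g^2/4 := by ring
    rw [e1] at htsq
    nlinarith [sq_nonneg g, htsq]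
  obtain ⟨R, hR⟩ : ∃ a, a = Real.sqrt (g^2 - 3*t^2) := ⟨_, rfl⟩
  have hR0 : 0 ≤ R := by rw [hR]; exact Real.sqrt_nonneg _
  have hR2 : R^2 = g^2 - 3*t^2 := by rw [hR]; exact Real.sq_sqrt hDisc
  have hRle : R ≤ g := by
    rw [hR]
    have := Real.sqrt_le_sqrt (show g^2 - 3*t^2 ≤ g^2 by linarith [sq_nonneg t])
    rwa [Real.sqrt_sq hg0.le] at this
  have hRge : (1-ε)*g ≤ R := by
    rw [hR]
    have htsq2 : t^2 ≤ (ε*g/3)^2 := pow_le_pow_left₀ ht0.le ht2 2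
    have hsq : ((1-ε)*g)^2 ≤ g^2 - 3*t^2 := by
      have p1 : 0 ≤ ε*(g*g) := by positivity
      have p2 : (ε*g/3)^2 = ε*ε*(g*g)/9 := by ring
      have p3 : ε*ε*(g*g) ≤ (1/2)*ε*(g*g)/1 := by
        have := mul_le_mul_of_nonneg_right hε12 (le_of_lt (mul_pos hε0 (mul_pos hg0 hg0)))
        calc ε*ε*(g*g) = ε*(ε*(g*g)) := by ring
          _ ≤ (1/2)*(ε*(g*g)) := mul_le_mul_of_nonneg_right hε12 (by positivity)
          _ = (1/2)*ε*(g*g)/1 := by ring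
      nlinarith [htsq2, p1, p2, p3]
    have := Real.sqrt_le_sqrt hsq
    rwa [Real.sqrt_sq (mul_nonneg (by linarith) hg0.le)] at this
  obtain ⟨e, he⟩ : ∃ a, a = (g - R)/3 := ⟨_, rfl⟩
  have he0 : 0 ≤ e := by rw [he]; linarith
  have heq : e*(g + R) = t^2 := by
    rw [he]
    linear_combination (-1/3)*hR2
  have hquad : 3*e^2 - 2*g*e + t^2 = 0 := by
    rw [he]
    linear_combination (1/3)*hR2
  have heup : e*((2-ε)*g) ≤ t^2 := by
    rw [← heq]
    apply mul_le_mul_of_nonneg_left _ he0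
    linarith [hRge]
  have q1 : e*g ≤ t^2 := by
    have hp : 0 ≤ e*R := mul_nonneg he0 hR0
    have e1 : e*(g+R) = e*g + e*R := by ring
    rw [e1] at heq
    linarith
  have q2 : t^2 ≤ t*g/2 := by
    have := mul_le_mul_of_nonneg_left ht3 ht0.le
    have e1 : t*(g/2) = t*g/2 := by ring
    have e2 : t*t = t^2 := by ring
    linarith [this, e1.symm ▸ this]
  have q3 : 0 < t*g := mul_pos ht0 hg0
  have helt : e < t := by
    apply lt_of_mul_lt_mul_right _ hg0.le
    calc e*g ≤ t^2 := q1
      _ ≤ t*g/2 := q2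
      _ < t*g := by linarith [q3]
  have hele : e ≤ t := helt.le
  -- perturbed point
  obtain ⟨x1, hx1⟩ : ∃ a, a = x - 2*e := ⟨_, rfl⟩
  obtain ⟨y1, hy1⟩ : ∃ a, a = y + t + e := ⟨_, rfl⟩
  obtain ⟨z1, hz1⟩ : ∃ a, a = y - t + e := ⟨_, rfl⟩
  have hx10 : 0 < x1 := by
    rw [hx1]
    linarith [helt, ht4, ht0]
  have hy10 : 0 < y1 := by rw [hy1]; linarith
  have hz10 : 0 < z1 := by rw [hz1]; linarith
  have hsum : x1 + y1 + z1 = x + y + y := by rw [hx1, hy1, hz1]; ring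
  have hsq : x1^2 + y1^2 + z1^2 = x^2 + y^2 + y^2 := by
    rw [hx1, hy1, hz1]
    linear_combination 2*hquad + 4*e*hg
  have hle := hmin x1 y1 z1 hx10.le hy10.le hz10.le hsum hsq
  clear hmin
  -- entropy estimate
  have hT1 : Real.negMulLog x1 = Real.negMulLog x + (-lx - 1)*(-(2*e))
      - (x1 * (Real.log x1 - lx) - (-(2*e))) := by
    have := negMulLog_eq_tangent x1 x
    rw [← hlx] at this
    have e1 : x1 - x = -(2*e) := by rw [hx1]; ring
    rw [e1] at this
    exact this
  have hT2 : Real.negMulLog y1 = Real.negMulLog y + (-ly - 1)*(t + e)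
      - (y1 * (Real.log y1 - ly) - (t + e)) := by
    have := negMulLog_eq_tangent y1 y
    rw [← hly] at this
    have e1 : y1 - y = t + e := by rw [hy1]; ring
    rw [e1] at this
    exact this
  have hT3 : Real.negMulLog z1 = Real.negMulLog y + (-ly - 1)*(-t + e)
      - (z1 * (Real.log z1 - ly) - (-t + e)) := by
    have := negMulLog_eq_tangent z1 y
    rw [← hly] at this
    have e1 : z1 - y = -t + e := by rw [hz1]; ring
    rw [e1] at this
    exact this
  -- lower bounds on remainders
  have hRx : 0 ≤ x1 * (Real.log x1 - lx) - (-(2*e)) := by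
    have := Rr_nonneg' hx10 hx0
    rw [← hlx] at this
    have e1 : x1 - x = -(2*e) := by rw [hx1]; ring
    rw [e1] at this
    exact this
  have hy1y : max y1 y = y1 := max_eq_left (by rw [hy1]; linarith)
  have hz1y : max z1 y = y := max_eq_right (by rw [hz1]; linarith)
  have hRy : (t+e)^2/(2*y1) ≤ y1 * (Real.log y1 - ly) - (t + e) := by
    have := Rr_ge' hy10 hy0
    rw [← hly, hy1y] at this
    have e1 : y1 - y = t + e := by rw [hy1]; ring
    rw [e1] at this
    exact this
  have hRz : (t-e)^2/(2*y) ≤ z1 * (Real.log z1 - ly) - (-t + e) := by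
    have := Rr_ge' hz10 hy0
    rw [← hly, hz1y] at this
    have e1 : z1 - y = -t + e := by rw [hz1]; ring
    rw [e1] at this
    have e2 : (-t + e)^2 = (t - e)^2 := by ring
    rw [e2] at this
    exact this
  -- comparison denominators
  have hy1eps : y1 ≤ (1+ε)*y := by
    rw [hy1]
    have e1 : (1+ε)*y = y + ε*y := by ring
    rw [e1]
    linarith [hele, ht1]
  have hden : (0:ℝ) < (1+ε)*y := by positivity
  have hRy' : (t+e)^2/(2*((1+ε)*y)) ≤ (t+e)^2/(2*y1) := by
    apply div_le_div_of_nonneg_left (by positivity) (by positivity) (by linarith)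
  have hRz' : (t-e)^2/(2*((1+ε)*y)) ≤ (t-e)^2/(2*y) := by
    apply div_le_div_of_nonneg_left (by positivity) (by positivity) (by
      have : 0 ≤ ε*y := by positivity
      have e1 : 2*((1+ε)*y) = 2*y + 2*(ε*y) := by ring
      linarith)
  -- combine
  have hmain0 : 0 ≤ 2*e*L - ((t+e)^2 + (t-e)^2)/(2*((1+ε)*y)) := by
    have hsum2 : ((t+e)^2 + (t-e)^2)/(2*((1+ε)*y))
        = (t+e)^2/(2*((1+ε)*y)) + (t-e)^2/(2*((1+ε)*y)) := by ring
    have hLpart : (-lx - 1)*(-(2*e)) + (-ly - 1)*(t + e) + (-ly - 1)*(-t + e) = 2*e*L - 0 := by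
      rw [hL]; ring
    rw [hsum2]
    have hchain : Real.negMulLog x + Real.negMulLog y + Real.negMulLog y
        ≤ Real.negMulLog x + Real.negMulLog y + Real.negMulLog y + 2*e*L
          - (0 + (t+e)^2/(2*((1+ε)*y)) + (t-e)^2/(2*((1+ε)*y))) := by
      calc Real.negMulLog x + Real.negMulLog y + Real.negMulLog y
          ≤ Real.negMulLog x1 + Real.negMulLog y1 + Real.negMulLog z1 := hle
        _ ≤ _ := by
            rw [hT1, hT2, hT3]
            have l1 := le_trans hRy' hRy
            have l2 := le_trans hRz' hRz
            rw [hL]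
            ring_nf
            ring_nf at l1 l2 hRx
            linarith [hRx, l1, l2]
    linarith [hchain]
  have hmain : t^2 + e^2 ≤ 2*e*L*((1+ε)*y) := by
    have h1 : ((t+e)^2 + (t-e)^2)/(2*((1+ε)*y)) ≤ 2*e*L := by linarith [hmain0]
    rw [div_le_iff₀ (by positivity : (0:ℝ) < 2*((1+ε)*y))] at h1
    have e1 : (t+e)^2 + (t-e)^2 = 2*t^2 + 2*e^2 := by ring
    have e2 : 2*e*L*(2*((1+ε)*y)) = 2*(2*e*L*((1+ε)*y)) := by ring
    rw [e1, e2] at h1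
    linarith
  exact final2_helper ht0 hy0 hg0 hε0 he0 (by linarith [hεg]) heup hmain

lemma exists_min (d : ℕ) (P : ℝ) (p0 : Fin d → ℝ) (hp0 : ∀ i, 0 ≤ p0 i)
    (hp1 : ∑ i, p0 i = 1) (hp2 : ∑ i, (p0 i)^2 = P) :
    ∃ q : Fin d → ℝ, (∀ i, 0 ≤ q i) ∧ ∑ i, q i = 1 ∧ ∑ i, (q i)^2 = P ∧
      ∀ p : Fin d → ℝ, (∀ i, 0 ≤ p i) → ∑ i, p i = 1 → ∑ i, (p i)^2 = P →
        ∑ i, Real.negMulLog (q i) ≤ ∑ i, Real.negMulLog (p i) := by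
  set S : Set (Fin d → ℝ) :=
    {p | (∀ i, 0 ≤ p i) ∧ ∑ i, p i = 1 ∧ ∑ i, (p i)^2 = P} with hS
  have hSne : S.Nonempty := ⟨p0, hp0, hp1, hp2⟩
  have h1 : IsClosed {p : Fin d → ℝ | ∀ i, 0 ≤ p i} := by
    have e1 : {p : Fin d → ℝ | ∀ i, 0 ≤ p i} = ⋂ i, {p : Fin d → ℝ | 0 ≤ p i} := by
      ext p; simp
    rw [e1]
    exact isClosed_iInter fun i => isClosed_le continuous_const (continuous_apply i)
  have h2 : IsClosed {p : Fin d → ℝ | ∑ i, p i = 1} :=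
    isClosed_eq (continuous_finset_sum _ fun i _ => continuous_apply i) continuous_const
  have h3 : IsClosed {p : Fin d → ℝ | ∑ i, (p i)^2 = P} :=
    isClosed_eq (continuous_finset_sum _ fun i _ => (continuous_apply i).pow 2) continuous_const
  have hclosed : IsClosed S := by
    have e2 : S = {p : Fin d → ℝ | ∀ i, 0 ≤ p i} ∩
        ({p : Fin d → ℝ | ∑ i, p i = 1} ∩ {p : Fin d → ℝ | ∑ i, (p i)^2 = P}) := by
      ext p
      simp only [hS, Set.mem_setOf_eq, Set.mem_inter_iff]
    rw [e2]
    exact h1.inter (h2.inter h3)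
  have hsub : S ⊆ Set.Icc (0 : Fin d → ℝ) 1 := by
    rintro p ⟨hnn, hsum, -⟩
    constructor
    · intro i; exact hnn i
    · intro i
      calc p i ≤ ∑ j, p j := Finset.single_le_sum (fun j _ => hnn j) (Finset.mem_univ i)
        _ = 1 := hsum
  have hcomp : IsCompact S := (isCompact_Icc).of_isClosed_subset hclosed hsub
  have hcont : ContinuousOn (fun p : Fin d → ℝ => ∑ i, Real.negMulLog (p i)) S :=
    (continuous_finset_sum _ fun i _ =>
      Real.continuous_negMulLog.comp (continuous_apply i)).continuousOn
  obtain ⟨q, hqS, hqmin⟩ := hcomp.exists_isMinOn hSne hcont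
  exact ⟨q, hqS.1, hqS.2.1, hqS.2.2, fun p ha hb hc => hqmin ⟨ha, hb, hc⟩⟩

lemma sum_three_update {d : ℕ} (q : Fin d → ℝ) (i j l : Fin d)
    (hij : i ≠ j) (hil : i ≠ l) (hjl : j ≠ l) (x' y' z' : ℝ) (f : ℝ → ℝ) :
    ∑ m, f (if m = i then x' else if m = j then y' else if m = l then z' else q m)
    = ∑ m, f (q m) - (f (q i) + f (q j) + f (q l)) + (f x' + f y' + f z') := by
  set p : Fin d → ℝ := fun m => if m = i then x' else if m = j then y' else if m = l then z' else q m with hp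
  have hsupp : ∀ m ∈ Finset.univ, m ∉ ({i, j, l} : Finset (Fin d)) → f (p m) - f (q m) = 0 := by
    intro m _ hm
    simp only [Finset.mem_insert, Finset.mem_singleton, not_or] at hm
    simp only [hp, if_neg hm.1, if_neg hm.2.1, if_neg hm.2.2, sub_self]
  have hmem : ({i, j, l} : Finset (Fin d)) ⊆ Finset.univ := Finset.subset_univ _
  have key : ∑ m, (f (p m) - f (q m)) = ∑ m ∈ ({i, j, l} : Finset (Fin d)), (f (p m) - f (q m)) :=
    (Finset.sum_subset hmem (fun m hm hnm => hsupp m hm hnm)).symm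
  have hexp : ∑ m ∈ ({i, j, l} : Finset (Fin d)), (f (p m) - f (q m))
      = (f (p i) - f (q i)) + (f (p j) - f (q j)) + (f (p l) - f (q l)) := by
    rw [Finset.sum_insert (by simp [hij, hil]), Finset.sum_insert (by simp [hjl]),
      Finset.sum_singleton]
    ring
  have hpi : p i = x' := by simp [hp]
  have hpj : p j = y' := by simp [hp, hij.symm]
  have hpl : p l = z' := by simp [hp, hil.symm, hjl.symm]
  have hsub : ∑ m, (f (p m) - f (q m)) = ∑ m, f (p m) - ∑ m, f (q m) :=
    Finset.sum_sub_distrib _ _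
  rw [hsub] at key
  rw [hpi, hpj, hpl] at hexp
  have := key.trans hexp
  linarith [this]

set_option maxHeartbeats 1000000 in
lemma endgame (k m : ℕ) (u v P A : ℝ) (hk : 2 ≤ k) (hm : 1 ≤ m) (hv : 0 < v) (hvu : v < u)
    (e1 : (m:ℝ)*u + v = 1) (e2 : (m:ℝ)*u^2 + v^2 = P)
    (hP1 : 1/(k:ℝ) ≤ P) (hP2 : P ≤ 1/((k:ℝ)-1))
    (hA : A = 1/(k:ℝ) - Real.sqrt ((1 - 1/(k:ℝ)) * (P - 1/(k:ℝ)))) :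
    -((1 - A) * Real.log ((1 - A)/((k:ℝ)-1))) - A * Real.log A
      = (m:ℝ) * Real.negMulLog u + Real.negMulLog v := by
  have hK2 : (2:ℝ) ≤ (k:ℝ) := by exact_mod_cast hk
  have hK0 : (0:ℝ) < (k:ℝ) := by linarith
  have hK1 : (0:ℝ) < (k:ℝ) - 1 := by linarith
  have hM1 : (1:ℝ) ≤ (m:ℝ) := by exact_mod_cast hm
  have hu0 : 0 < u := lt_trans hv hvu
  have hP0 : 0 < P := lt_of_lt_of_le (by positivity) hP1
  have hid1 : 1 - (m:ℝ)*P = v*(2*(m:ℝ)*u - ((m:ℝ)-1)*v) := by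
    linear_combination (-((m:ℝ)*u + v + 1))*e1 + (m:ℝ)*e2
  have hmv : (m:ℝ)*v ≤ (m:ℝ)*u := mul_le_mul_of_nonneg_left hvu.le (by linarith)
  have hmv0 : 0 < (m:ℝ)*v := mul_pos (by linarith) hv
  have hpos : 0 < 2*(m:ℝ)*u - ((m:ℝ)-1)*v := by
    have e : 2*(m:ℝ)*u = 2*((m:ℝ)*u) := by ring
    have e2' : ((m:ℝ)-1)*v = (m:ℝ)*v - v := by ring
    linarith [hmv, hmv0, hv]
  have hf1 : (m:ℝ)*P < 1 := by
    have := mul_pos hv hpos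
    linarith [hid1, this]
  have hid2 : ((m:ℝ)+1)*P - 1 = (m:ℝ)*(u-v)^2 := by
    linear_combination ((m:ℝ)*u + v + 1)*e1 - ((m:ℝ)+1)*e2
  have hf2 : 1 < ((m:ℝ)+1)*P := by
    have : 0 < (m:ℝ)*(u-v)^2 := mul_pos (by linarith) (pow_pos (sub_pos.2 hvu) 2)
    linarith [hid2, this]
  have hmk : (m:ℝ) = (k:ℝ) - 1 := by
    have hmlt : (m:ℝ) < (k:ℝ) := by
      have h1 : 1 ≤ (k:ℝ)*P := by
        rw [div_le_iff₀ hK0] at hP1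
        linarith [hP1]
      exact lt_of_mul_lt_mul_right (lt_of_lt_of_le hf1 h1) hP0.le
    have hklt : (k:ℝ) - 1 < (m:ℝ) + 1 := by
      have h2 : ((k:ℝ)-1)*P ≤ 1 := by
        rw [le_div_iff₀ hK1] at hP2
        linarith [hP2]
      exact lt_of_mul_lt_mul_right (lt_of_le_of_lt h2 hf2) hP0.le
    have hm1 : m < k := by exact_mod_cast hmlt
    have hm2 : k - 1 < m + 1 := by
      have hcast : ((k - 1 : ℕ) : ℝ) = (k:ℝ) - 1 := by
        have h1k : 1 ≤ k := by omega
        push_cast [h1k]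
        ring
      rw [← hcast] at hklt
      exact_mod_cast hklt
    have hkm : m = k - 1 := by omega
    rw [hkm]
    have h1k : 1 ≤ k := by omega
    push_cast [h1k]
    ring
  set K : ℝ := (k:ℝ) with hKdef
  rw [hmk] at e1 e2 ⊢
  have hu : (K-1)*u = 1 - v := by linarith [e1]
  have hq0 : (1-v)^2 + (K-1)*v^2 - (K-1)*P = 0 := by
    linear_combination (K-1)*e2 - ((K-1)*u + (1-v))*hu
  have hvq : K*v^2 - 2*v + 1 - (K-1)*P = 0 := by linear_combination hq0
  have h1K : 1/K ≤ 1 := by rw [div_le_one hK0]; linarith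
  have hrad0 : 0 ≤ (1 - 1/K) * (P - 1/K) := by
    apply mul_nonneg (by linarith) (by linarith [hP1])
  obtain ⟨W, hW⟩ : ∃ a, a = Real.sqrt ((1 - 1/K) * (P - 1/K)) := ⟨_, rfl⟩
  have hW0 : 0 ≤ W := by rw [hW]; exact Real.sqrt_nonneg _
  have hW2 : W^2 = (1 - 1/K) * (P - 1/K) := by rw [hW]; exact Real.sq_sqrt hrad0
  have hAW : A = 1/K - W := by rw [hA, hW]
  have hKne : K ≠ 0 := ne_of_gt hK0
  have hW2K : K^2*W^2 = (K-1)*(K*P-1) := by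
    rw [hW2]
    field_simp
  have hKA : K*A = 1 - K*W := by
    rw [hAW, mul_sub, mul_one_div, div_self hKne]
  have hAqK : K*(K*A^2 - 2*A + 1 - (K-1)*P) = 0 := by
    linear_combination (K*A - 1 - K*W)*hKA + hW2K
  have hAq : K*A^2 - 2*A + 1 - (K-1)*P = 0 := by
    rcases mul_eq_zero.1 hAqK with h | h
    · exact absurd h hKne
    · exact h
  have hKv1 : K*v < 1 := by
    have h1 : (K-1)*v < (K-1)*u := mul_lt_mul_of_pos_left hvu hK1
    have e : K*v = (K-1)*v + v := by ring
    linarith [h1, e1]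
  have hKA1 : K*A ≤ 1 := by
    have := mul_nonneg hK0.le hW0
    linarith [hKA, this]
  have hvA : v = A := by
    have hsub : (v - A)*(K*(v + A) - 2) = 0 := by linear_combination hvq - hAq
    rcases mul_eq_zero.1 hsub with h | h
    · linarith [sub_eq_zero.1 h]
    · exfalso
      have e : K*(v+A) = K*v + K*A := by ring
      linarith [h, e, hKv1, hKA1]
  have hKu : (K-1)*u = 1 - A := by rw [← hvA]; exact hu
  have hub : u = (1-A)/(K-1) := by
    rw [eq_div_iff (ne_of_gt hK1)]
    linarith [hKu]
  rw [← hub, ← hvA]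
  simp only [Real.negMulLog]
  linear_combination (Real.log u)*hu

lemma uniform_case (k n : ℕ) (hk : 2 ≤ k) (hn : 1 ≤ n) (A : ℝ)
    (hP1 : 1/(k:ℝ) ≤ 1/(n:ℝ)) (hP2 : 1/(n:ℝ) ≤ 1/((k:ℝ)-1))
    (hA : A = 1/(k:ℝ) - Real.sqrt ((1 - 1/(k:ℝ)) * (1/(n:ℝ) - 1/(k:ℝ)))) :
    -((1 - A) * Real.log ((1 - A)/((k:ℝ)-1))) - A * Real.log A ≤ Real.log n := by
  have hK2 : (2:ℝ) ≤ (k:ℝ) := by exact_mod_cast hk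
  have hK0 : (0:ℝ) < (k:ℝ) := by linarith
  have hK1 : (0:ℝ) < (k:ℝ) - 1 := by linarith
  have hN0 : (0:ℝ) < (n:ℝ) := by exact_mod_cast hn
  have hnk : n ≤ k := by
    have h := (div_le_div_iff_of_pos_left one_pos hK0 hN0).1 hP1
    exact_mod_cast h
  have hkn : k - 1 ≤ n := by
    have h := (div_le_div_iff_of_pos_left one_pos hN0 hK1).1 hP2
    have hcast : ((k - 1 : ℕ) : ℝ) = (k:ℝ) - 1 := by
      have h1k : 1 ≤ k := by omega
      push_cast [h1k]; ring
    rw [← hcast] at h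
    exact_mod_cast h
  have hcase : n = k ∨ n = k - 1 := by omega
  rcases hcase with h | h
  · subst h
    have hN2 : (2:ℝ) ≤ (n:ℝ) := hK2
    have hrad : (1 - 1/(n:ℝ)) * (1/(n:ℝ) - 1/(n:ℝ)) = 0 := by ring
    rw [hrad, Real.sqrt_zero, sub_zero] at hA
    have he : (1 - 1/(n:ℝ))/((n:ℝ)-1) = 1/(n:ℝ) := by
      rw [div_eq_div_iff (by linarith) (by linarith)]
      field_simp
    rw [hA, he, one_div, Real.log_inv]
    have : -((1 - ((n:ℝ))⁻¹) * -Real.log n) - ((n:ℝ))⁻¹ * -Real.log n = Real.log n := by ring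
    linarith [this.le]
  · have hnR : (n:ℝ) = (k:ℝ) - 1 := by
      rw [h]
      have h1k : 1 ≤ k := by omega
      push_cast [h1k]; ring
    have hrad : (1 - 1/(k:ℝ)) * (1/(n:ℝ) - 1/(k:ℝ)) = (1/(k:ℝ))^2 := by
      rw [hnR]
      field_simp
      ring
    rw [hrad, Real.sqrt_sq (by positivity)] at hA
    have hA0 : A = 0 := by rw [hA]; ring
    rw [hA0, hnR]
    have he : (1 - (0:ℝ))/((k:ℝ)-1) = ((k:ℝ)-1)⁻¹ := by norm_num
    rw [he, Real.log_inv]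
    have : -((1 - (0:ℝ)) * -Real.log ((k:ℝ)-1)) - 0 * Real.log 0 = Real.log ((k:ℝ)-1) := by ring
    linarith [this.le]

set_option maxHeartbeats 1000000 in
lemma prob_bound (d k : ℕ) (p : Fin d → ℝ) (hp : ∀ i, 0 ≤ p i) (h1 : ∑ i, p i = 1)
    (hk1 : 1/(k:ℝ) ≤ ∑ i, (p i)^2) (hk2 : ∑ i, (p i)^2 ≤ 1/((k:ℝ)-1)) (A : ℝ)
    (hA : A = 1/(k:ℝ) - Real.sqrt ((1 - 1/(k:ℝ)) * ((∑ i, (p i)^2) - 1/(k:ℝ)))) :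
    -((1 - A) * Real.log ((1 - A)/((k:ℝ)-1))) - A * Real.log A
      ≤ ∑ i, Real.negMulLog (p i) := by
  obtain ⟨P, hPd⟩ : ∃ a, a = ∑ i, (p i)^2 := ⟨_, rfl⟩
  rw [← hPd] at hk1 hk2 hA
  -- P > 0
  have hP0 : 0 < P := by
    have hex : ∃ i, 0 < p i := by
      by_contra hc
      push_neg at hc
      have : ∀ i ∈ Finset.univ, p i = 0 := fun i _ => le_antisymm (hc i) (hp i)
      rw [Finset.sum_eq_zero this] at h1
      norm_num at h1
    obtain ⟨i0, hi0⟩ := hex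
    have : (p i0)^2 ≤ ∑ i, (p i)^2 :=
      Finset.single_le_sum (fun i _ => sq_nonneg (p i)) (Finset.mem_univ i0)
    rw [← hPd] at this
    nlinarith [this, hi0]
  -- k ≥ 2
  have hk : 2 ≤ k := by
    by_contra hc
    push_neg at hc
    interval_cases k
    · norm_num at hk2
      linarith
    · norm_num at hk2
      linarith
  -- minimizer
  obtain ⟨q, hq0, hq1, hqP, hqmin⟩ := exists_min d P p hp h1 hPd.symm
  have hgoal : -((1 - A) * Real.log ((1 - A)/((k:ℝ)-1))) - A * Real.log A
      ≤ ∑ i, Real.negMulLog (q i) → -((1 - A) * Real.log ((1 - A)/((k:ℝ)-1))) - A * Real.log A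
      ≤ ∑ i, Real.negMulLog (p i) :=
    fun h => le_trans h (hqmin p hp h1 hPd.symm)
  apply hgoal
  clear hgoal h1 hp hPd
  -- exchange principle
  have hmin3 : ∀ (i j l : Fin d), i ≠ j → i ≠ l → j ≠ l →
      ∀ x' y' z' : ℝ, 0 ≤ x' → 0 ≤ y' → 0 ≤ z' → x' + y' + z' = q i + q j + q l →
      x'^2 + y'^2 + z'^2 = (q i)^2 + (q j)^2 + (q l)^2 →
      Real.negMulLog (q i) + Real.negMulLog (q j) + Real.negMulLog (q l) ≤
        Real.negMulLog x' + Real.negMulLog y' + Real.negMulLog z' := by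
    intro i j l hij hil hjl x' y' z' hx' hy' hz' hs hsq
    have hid := sum_three_update q i j l hij hil hjl x' y' z' (fun x => x)
    have hsq2 := sum_three_update q i j l hij hil hjl x' y' z' (fun x => x^2)
    have hnml := sum_three_update q i j l hij hil hjl x' y' z' Real.negMulLog
    set pnew : Fin d → ℝ :=
      fun m => if m = i then x' else if m = j then y' else if m = l then z' else q m with hpnew
    have hpnew0 : ∀ m, 0 ≤ pnew m := by
      intro m
      simp only [hpnew]
      split
      · exact hx'
      split
      · exact hy'
      split
      · exact hz'
      · exact hq0 m
    have hpsum : ∑ m, pnew m = 1 := by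
      rw [hpnew]
      rw [hid, hq1]
      linarith [hs]
    have hpsq : ∑ m, (pnew m)^2 = P := by
      rw [hpnew]
      rw [hsq2, hqP]
      linarith [hsq]
    have := hqmin pnew hpnew0 hpsum hpsq
    rw [hpnew] at this
    rw [hnml] at this
    linarith [this]
  clear hqmin
  -- support
  set T : Finset (Fin d) := Finset.univ.filter (fun i => 0 < q i) with hT
  have hTz : ∀ i, i ∉ T → q i = 0 := by
    intro i hi
    simp only [hT, Finset.mem_filter, Finset.mem_univ, true_and, not_lt] at hi
    exact le_antisymm hi (hq0 i)
  have hTmem : ∀ i, i ∈ T ↔ 0 < q i := by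
    intro i
    simp only [hT, Finset.mem_filter, Finset.mem_univ, true_and]
  have hsumT : ∑ i ∈ T, q i = 1 := by
    rw [← hq1]
    exact Finset.sum_subset (Finset.filter_subset _ _) (fun i _ hi => hTz i hi)
  have hsqT : ∑ i ∈ T, (q i)^2 = P := by
    rw [← hqP]
    exact Finset.sum_subset (Finset.filter_subset _ _)
      (fun i _ hi => by rw [hTz i hi]; ring)
  have hnmlT : ∑ i ∈ T, Real.negMulLog (q i) = ∑ i, Real.negMulLog (q i) :=
    Finset.sum_subset (Finset.filter_subset _ _)
      (fun i _ hi => by rw [hTz i hi]; exact Real.negMulLog_zero)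
  have hTne : T.Nonempty := by
    by_contra hc
    rw [Finset.not_nonempty_iff_eq_empty] at hc
    rw [hc, Finset.sum_empty] at hsumT
    norm_num at hsumT
  obtain ⟨iu, hiuT, hiu⟩ := T.exists_max_image q hTne
  obtain ⟨iv, hivT, hiv⟩ := T.exists_min_image q hTne
  have hv0 : 0 < q iv := (hTmem iv).1 hivT
  have hvu : q iv ≤ q iu := hiu iv hivT
  rw [← hnmlT]
  rcases eq_or_lt_of_le hvu with hequal | hlt
  · -- uniform case
    have huni : ∀ i ∈ T, q i = q iu := fun i hi =>
      le_antisymm (hiu i hi) (hequal ▸ hiv i hi)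
    obtain ⟨n, hn⟩ : ∃ a, a = T.card := ⟨_, rfl⟩
    have hn1 : 1 ≤ n := by rw [hn]; exact Finset.card_pos.2 hTne
    have hN0 : (0:ℝ) < (n:ℝ) := by exact_mod_cast hn1
    have hsum_n : (n:ℝ) * q iu = 1 := by
      rw [← hsumT, Finset.sum_congr rfl huni, Finset.sum_const, nsmul_eq_mul, ← hn]
    have hsq_n : (n:ℝ) * (q iu)^2 = P := by
      rw [← hsqT, Finset.sum_congr rfl (fun i hi => by rw [huni i hi]), Finset.sum_const,
        nsmul_eq_mul, ← hn]
    have hPn : P = 1/(n:ℝ) := by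
      have h2 : P = q iu := by nlinarith [hsum_n, hsq_n]
      rw [h2, eq_div_iff (ne_of_gt hN0)]
      linarith [hsum_n]
    have hent : ∑ i ∈ T, Real.negMulLog (q i) = Real.log n := by
      have hqiu : q iu = 1/(n:ℝ) := by
        rw [eq_div_iff (ne_of_gt hN0)]
        linarith [hsum_n]
      rw [Finset.sum_congr rfl (fun i hi => by rw [huni i hi]), Finset.sum_const,
        nsmul_eq_mul, ← hn, hqiu]
      simp only [Real.negMulLog, one_div, Real.log_inv]
      field_simp
    rw [hent]
    rw [hPn] at hA hk1 hk2
    exact uniform_case k n hk hn1 A hk1 hk2 hA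
  · -- two-value case
    have hvals : ∀ i ∈ T, q i = q iu ∨ q i = q iv := by
      intro i hi
      by_contra hc
      push_neg at hc
      have h1' : q i < q iu := lt_of_le_of_ne (hiu i hi) hc.1
      have h2' : q iv < q i := lt_of_le_of_ne (hiv i hi) (Ne.symm hc.2)
      have hiui : iu ≠ i := fun h => by rw [h] at h1'; exact lt_irrefl _ h1'
      have hiuiv : iu ≠ iv := fun h => by rw [h] at hlt; exact lt_irrefl _ hlt
      have hiiv : i ≠ iv := fun h => by rw [h] at h2'; exact lt_irrefl _ h2'
      exact core1 hv0 h2' h1' (hmin3 iu i iv hiui hiuiv hiiv)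
    -- the minimum value occurs exactly once
    have hTvuniq : ∀ j ∈ T, q j = q iv → j = iv := by
      intro j hjT hjv
      by_contra hjne
      have hiuj : iu ≠ j := fun h => by rw [h, hjv] at hlt; exact lt_irrefl _ hlt
      have hiuiv : iu ≠ iv := fun h => by rw [h] at hlt; exact lt_irrefl _ hlt
      have hmin' := hmin3 iu j iv hiuj hiuiv hjne
      rw [hjv] at hmin'
      exact core2 hv0 hlt hmin'
    obtain ⟨Tu, hTu⟩ : ∃ a, a = T.filter (fun i => q i = q iu) := ⟨_, rfl⟩
    have hsplit : T = Tu ∪ {iv} := by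
      ext i
      simp only [hTu, Finset.mem_union, Finset.mem_filter, Finset.mem_singleton]
      constructor
      · intro hi
        rcases hvals i hi with h | h
        · exact Or.inl ⟨hi, h⟩
        · exact Or.inr (hTvuniq i hi h)
      · rintro (⟨hi, -⟩ | rfl)
        · exact hi
        · exact hivT
    have hdisj : Disjoint Tu ({iv} : Finset (Fin d)) := by
      rw [Finset.disjoint_singleton_right]
      intro hmem
      rw [hTu] at hmem
      simp only [Finset.mem_filter] at hmem
      rw [hmem.2] at hlt
      exact lt_irrefl _ hlt
    obtain ⟨m, hm⟩ : ∃ a, a = Tu.card := ⟨_, rfl⟩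
    have hm1 : 1 ≤ m := by
      rw [hm]
      apply Finset.card_pos.2
      refine ⟨iu, ?_⟩
      rw [hTu]
      exact Finset.mem_filter.2 ⟨hiuT, rfl⟩
    have huTu : ∀ i ∈ Tu, q i = q iu := by
      intro i hi
      rw [hTu] at hi
      exact (Finset.mem_filter.1 hi).2
    have he1 : (m:ℝ) * q iu + q iv = 1 := by
      rw [← hsumT, hsplit, Finset.sum_union hdisj, Finset.sum_singleton,
        Finset.sum_congr rfl huTu, Finset.sum_const, nsmul_eq_mul, ← hm]
    have he2 : (m:ℝ) * (q iu)^2 + (q iv)^2 = P := by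
      rw [← hsqT, hsplit, Finset.sum_union hdisj, Finset.sum_singleton,
        Finset.sum_congr rfl (fun i hi => by rw [huTu i hi]), Finset.sum_const,
        nsmul_eq_mul, ← hm]
    have hent : ∑ i ∈ T, Real.negMulLog (q i)
        = (m:ℝ) * Real.negMulLog (q iu) + Real.negMulLog (q iv) := by
      rw [hsplit, Finset.sum_union hdisj, Finset.sum_singleton,
        Finset.sum_congr rfl (fun i hi => by rw [huTu i hi]), Finset.sum_const,
        nsmul_eq_mul, ← hm]
    rw [hent]
    rw [endgame k m (q iu) (q iv) P A hk hm1 hv0 hlt he1 he2 hk1 hk2 hA]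

lemma trace_eig {d : ℕ} (ρ : Matrix (Fin d) (Fin d) ℂ) (hρ : ρ.IsHermitian) :
    ρ.trace = ∑ i, (hρ.eigenvalues i : ℂ) := by
  obtain ⟨U, hU⟩ : ∃ a, a = (hρ.eigenvectorUnitary : Matrix (Fin d) (Fin d) ℂ) := ⟨_, rfl⟩
  have hUU : star U * U = 1 := by
    rw [hU]
    have h := hρ.eigenvectorUnitary.2
    exact (Matrix.mem_unitaryGroup_iff'.mp h)
  conv_lhs => rw [hρ.spectral_theorem, Unitary.conjStarAlgAut_apply, ← hU]
  rw [Matrix.trace_mul_cycle, hUU, Matrix.one_mul, Matrix.trace_diagonal]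
  rfl

lemma purity_eig {d : ℕ} (ρ : Matrix (Fin d) (Fin d) ℂ) (hρ : ρ.IsHermitian) :
    purity ρ = ∑ i, (hρ.eigenvalues i)^2 := by
  obtain ⟨U, hU⟩ : ∃ a, a = (hρ.eigenvectorUnitary : Matrix (Fin d) (Fin d) ℂ) := ⟨_, rfl⟩
  obtain ⟨D, hD⟩ : ∃ a, a = Matrix.diagonal (RCLike.ofReal ∘ hρ.eigenvalues :
      Fin d → ℂ) := ⟨_, rfl⟩
  have hUU : star U * U = 1 := by
    rw [hU]
    exact (Matrix.mem_unitaryGroup_iff'.mp hρ.eigenvectorUnitary.2)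
  have hspec : ρ = U * D * star U := by rw [hU, hD]; exact hρ.spectral_theorem
  have hmul : ρ * ρ = U * (D * D) * star U := by
    rw [hspec]
    calc U * D * star U * (U * D * star U)
        = U * D * (star U * U) * (D * star U) := by
          simp only [Matrix.mul_assoc]
      _ = U * (D * D) * star U := by
          rw [hUU]
          simp only [Matrix.mul_one, Matrix.mul_assoc, Matrix.one_mul]
  have htr : (ρ * ρ).trace = (D * D).trace := by
    rw [hmul, Matrix.trace_mul_cycle, hUU, Matrix.one_mul]
  have hDD : (D * D).trace = ∑ i, ((hρ.eigenvalues i : ℂ))^2 := by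
    rw [hD, Matrix.diagonal_mul_diagonal, Matrix.trace_diagonal]
    apply Finset.sum_congr rfl
    intro i _
    simp [sq]
  rw [purity, htr, hDD]
  have : (∑ i, ((hρ.eigenvalues i : ℂ))^2) = ((∑ i, (hρ.eigenvalues i)^2 : ℝ) : ℂ) := by
    push_cast
    rfl
  rw [this]
  exact Complex.ofReal_re _

/-- For a d-dimensional density matrix ρ with purity P = Tr(ρ²) and k the
integer with 1/k ≤ P ≤ 1/(k-1), setting α = 1/k - √((1-1/k)(P-1/k)), the von
Neumann entropy satisfies S(ρ) ≥ -(1-α) log((1-α)/(k-1)) - α log α. -/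
theorem stmt9 (d k : ℕ) (ρ : Matrix (Fin d) (Fin d) ℂ) (hρ : ρ.PosSemidef)
    (htr : ρ.trace = 1)
    (hk1 : 1/(k:ℝ) ≤ purity ρ) (hk2 : purity ρ ≤ 1/((k:ℝ)-1)) :
    let a : ℝ := 1/(k:ℝ) - Real.sqrt ((1 - 1/(k:ℝ)) * (purity ρ - 1/(k:ℝ)))
    (-((1 - a) * Real.logb 2 ((1 - a)/((k:ℝ)-1))) - a * Real.logb 2 a ≤
      vnEntropy hρ.1) := by
  intro a
  obtain ⟨lam, hlam⟩ : ∃ f, f = hρ.1.eigenvalues := ⟨_, rfl⟩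
  have hnn : ∀ i, 0 ≤ lam i := by rw [hlam]; exact hρ.eigenvalues_nonneg
  have hsum : ∑ i, lam i = 1 := by
    have h := trace_eig ρ hρ.1
    rw [htr] at h
    have h2 : ((∑ i, lam i : ℝ) : ℂ) = 1 := by
      rw [hlam]
      push_cast
      exact h.symm
    exact_mod_cast h2
  have hP : purity ρ = ∑ i, (lam i)^2 := by rw [hlam]; exact purity_eig ρ hρ.1
  rw [hP] at hk1 hk2
  have hA : a = 1/(k:ℝ) - Real.sqrt ((1 - 1/(k:ℝ)) * ((∑ i, (lam i)^2) - 1/(k:ℝ))) := by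
    show (1/(k:ℝ) - Real.sqrt ((1 - 1/(k:ℝ)) * (purity ρ - 1/(k:ℝ)))) = _
    rw [hP]
  have hnat := prob_bound d k lam hnn hsum hk1 hk2 a hA
  have hlog2 : (0:ℝ) < Real.log 2 := Real.log_pos one_lt_two
  have hvn : vnEntropy hρ.1 = (∑ i, Real.negMulLog (lam i))/Real.log 2 := by
    rw [vnEntropy, ← hlam]
    simp only [Real.logb, Real.negMulLog]
    rw [Finset.sum_div, ← Finset.sum_neg_distrib]
    apply Finset.sum_congr rfl
    intro i _
    ring
  have hG : -((1 - a) * Real.logb 2 ((1 - a)/((k:ℝ)-1))) - a * Real.logb 2 a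
      = (-((1 - a) * Real.log ((1 - a)/((k:ℝ)-1))) - a * Real.log a)/Real.log 2 := by
    simp only [Real.logb]
    ring
  rw [hvn, hG]
  exact div_le_div_of_nonneg_right hnat hlog2.le
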